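/- AV@R_α equals its spectral representation: for α ∈ (0,1) and Z ∈ L¹, AV@R_α(Z) = ∫₀¹ σ(t) F_Z^{−1}(t) dt where σ = α⁻¹ 𝟙_{[1−α,1]}, i.e., AV@R_α(Z) = α⁻¹ ∫_{1−α}^{1} F_Z^{−1}(t) dt. -/

import Mathlib

open MeasureTheory Set Filter ProbabilityTheory

noncomputable def qf (μ : Measure ℝ) (t : ℝ) : ℝ := sInf {z | t ≤ cdf μ z}

section qf

variable {μ : Measure ℝ} [IsProbabilityMeasure μ]

lemma qf_nonempty {t : ℝ} (ht1 : t < 1) : {z | t ≤ cdf μ z}.Nonempty := by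
  obtain ⟨z, hz⟩ := ((tendsto_cdf_atTop μ).eventually_const_le ht1).exists
  exact ⟨z, hz⟩

lemma qf_bddBelow {t : ℝ} (ht0 : 0 < t) : BddBelow {z | t ≤ cdf μ z} := by
  obtain ⟨z₀, hz₀⟩ := ((tendsto_cdf_atBot μ).eventually_lt_const ht0).exists
  refine ⟨z₀, fun z hz => le_of_not_gt fun hlt => ?_⟩
  exact absurd (hz.trans (monotone_cdf μ hlt.le)) (not_le.mpr hz₀)

lemma qf_le_iff {t : ℝ} (ht0 : 0 < t) (ht1 : t < 1) (z : ℝ) :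
    qf μ t ≤ z ↔ t ≤ cdf μ z := by
  constructor
  · intro h
    have hw : ∀ w ∈ Ioi z, t ≤ cdf μ w := by
      intro w hw
      obtain ⟨z', hz', hz'w⟩ := exists_lt_of_csInf_lt (qf_nonempty ht1) (lt_of_le_of_lt h hw)
      exact hz'.trans (monotone_cdf μ hz'w.le)
    have hts : Tendsto (cdf μ) (nhdsWithin z (Ioi z)) (nhds (cdf μ z)) :=
      ((cdf μ).right_continuous z).tendsto.mono_left (nhdsWithin_mono z Ioi_subset_Ici_self)
    exact ge_of_tendsto hts (eventually_nhdsWithin_of_forall hw)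
  · exact fun h => csInf_le (qf_bddBelow ht0) h

lemma qf_mono : MonotoneOn (qf μ) (Ioo (0:ℝ) 1) := by
  intro a ha b hb hab
  have hb' : (b:ℝ) ≤ cdf μ (qf μ b) := (qf_le_iff hb.1 hb.2 _).mp le_rfl
  exact (qf_le_iff ha.1 ha.2 _).mpr (hab.trans hb')

lemma qf_aemeas : AEMeasurable (qf μ) (volume.restrict (Ioo (0:ℝ) 1)) :=
  aemeasurable_restrict_of_monotoneOn measurableSet_Ioo qf_mono

lemma qf_map : (volume.restrict (Ioo (0:ℝ) 1)).map (qf μ) = μ := by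
  have h1 : IsProbabilityMeasure (volume.restrict (Ioo (0:ℝ) 1)) :=
    ⟨by simp [Real.volume_Ioo]⟩
  have h2 : IsProbabilityMeasure ((volume.restrict (Ioo (0:ℝ) 1)).map (qf μ)) :=
    Measure.isProbabilityMeasure_map qf_aemeas
  refine Measure.ext_of_Iic _ _ (fun z => ?_)
  rw [Measure.map_apply_of_aemeasurable qf_aemeas measurableSet_Iic,
    Measure.restrict_apply' measurableSet_Ioo]
  have hset : qf μ ⁻¹' (Iic z) ∩ Ioo (0:ℝ) 1 = Ioo 0 1 ∩ Iic (cdf μ z) := by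
    ext t
    simp only [mem_inter_iff, mem_Ioo, mem_preimage, mem_Iic]
    constructor
    · rintro ⟨hle, ht⟩; exact ⟨ht, (qf_le_iff ht.1 ht.2 z).mp hle⟩
    · rintro ⟨ht, hle⟩; exact ⟨(qf_le_iff ht.1 ht.2 z).mpr hle, ht⟩
  rw [hset, ← ofReal_cdf μ z]
  rcases eq_or_lt_of_le (cdf_le_one μ z) with hc | hc
  · have : Ioo (0:ℝ) 1 ∩ Iic (cdf μ z) = Ioo 0 1 := by
      rw [inter_eq_left]
      exact fun t ht => le_of_le_of_eq ht.2.le hc.symm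
    rw [this, Real.volume_Ioo, ← hc]
    norm_num
  · have : Ioo (0:ℝ) 1 ∩ Iic (cdf μ z) = Ioc 0 (cdf μ z) := by
      ext t
      simp only [mem_inter_iff, mem_Ioo, mem_Iic, mem_Ioc]
      constructor
      · rintro ⟨⟨h1', _⟩, h3⟩; exact ⟨h1', h3⟩
      · rintro ⟨h1', h2'⟩; exact ⟨⟨h1', lt_of_le_of_lt h2' hc⟩, h2'⟩
    rw [this, Real.volume_Ioc, sub_zero]

lemma qf_integrable_comp {g : ℝ → ℝ} (hg : Integrable g μ) :
    IntegrableOn (fun t => g (qf μ t)) (Ioo (0:ℝ) 1) := by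
  have hg' : Integrable g ((volume.restrict (Ioo (0:ℝ) 1)).map (qf μ)) := by
    rwa [qf_map]
  have hgm : AEStronglyMeasurable g ((volume.restrict (Ioo (0:ℝ) 1)).map (qf μ)) := by
    rw [qf_map]; exact hg.1
  exact (integrable_map_measure hgm qf_aemeas).mp hg'

lemma qf_integral {g : ℝ → ℝ} (hg : Integrable g μ) :
    ∫ t in Ioo (0:ℝ) 1, g (qf μ t) = ∫ z, g z ∂μ := by
  have hgm : AEStronglyMeasurable g ((volume.restrict (Ioo (0:ℝ) 1)).map (qf μ)) := by
    rw [qf_map]; exact hg.1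
  conv_rhs => rw [← qf_map (μ := μ)]
  rw [integral_map qf_aemeas hgm]

end qf

set_option maxHeartbeats 1000000 in
/-- spectral representation of AV@R: for α ∈ (0,1) and integrable Z,
inf_t { t + α⁻¹ E[(Z−t)₊] } = α⁻¹ ∫_{1−α}^{1} F_Z^{−1}(t) dt, where
F_Z^{−1}(t) = inf { z | P(Z ≤ z) ≥ t } is the left-side quantile of Z. -/
theorem stmt17 {Ω : Type*} [MeasurableSpace Ω] (P : Measure Ω) [IsProbabilityMeasure P]
    (α : ℝ) (hα : 0 < α) (hα1 : α < 1)
    (Z : Ω → ℝ) (hZm : Measurable Z) (hZ : Integrable Z P) :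
    (⨅ t : ℝ, t + α⁻¹ * ∫ ω, max (Z ω - t) 0 ∂P) =
      α⁻¹ * ∫ t in Set.Ioc (1 - α) 1, sInf {z : ℝ | t ≤ (P {ω | Z ω ≤ z}).toReal} := by
  set μ := P.map Z with hμ
  haveI : IsProbabilityMeasure μ := Measure.isProbabilityMeasure_map hZm.aemeasurable
  have hPz : ∀ z : ℝ, P {ω | Z ω ≤ z} = μ (Iic z) := fun z => by
    rw [hμ, Measure.map_apply hZm measurableSet_Iic]; rfl
  have hq : ∀ t : ℝ, sInf {z : ℝ | t ≤ (P {ω | Z ω ≤ z}).toReal} = qf μ t := by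
    intro t
    unfold qf
    congr 1
    ext z
    rw [mem_setOf_eq, mem_setOf_eq, hPz z, cdf_eq_real, Measure.real]
  -- basic facts
  have h1α0 : (0:ℝ) < 1 - α := by linarith
  have h1α : (1 - α) ∈ Ioo (0:ℝ) 1 := ⟨h1α0, by linarith⟩
  have hsub : Ioo (1 - α) (1:ℝ) ⊆ Ioo 0 1 := Ioo_subset_Ioo h1α0.le le_rfl
  have hid : Integrable (fun z : ℝ => z) μ :=
    (integrable_map_measure aestronglyMeasurable_id hZm.aemeasurable).mpr hZ
  have hgt : ∀ t : ℝ, Integrable (fun z : ℝ => max (z - t) 0) μ := fun t =>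
    (hid.sub (integrable_const t)).pos_part
  have hint_q : IntegrableOn (qf μ) (Ioo (0:ℝ) 1) :=
    qf_integrable_comp (g := fun z : ℝ => z) (μ := μ) hid
  have hint_q' : IntegrableOn (qf μ) (Ioo (1 - α) 1) := hint_q.mono_set hsub
  have hvol : (volume (Ioo (1 - α) (1:ℝ))).toReal = α := by
    rw [Real.volume_Ioo, show (1:ℝ)-(1-α)=α by ring, ENNReal.toReal_ofReal hα.le]
  have hconst : ∀ t : ℝ, IntegrableOn (fun _ : ℝ => t) (Ioo (1 - α) 1) := fun t =>
    integrableOn_const (by rw [Real.volume_Ioo]; exact ENNReal.ofReal_ne_top)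
  set I : ℝ := ∫ t in Ioo (1 - α) (1:ℝ), qf μ t with hI
  -- rewrite the expectation via the quantile transform
  have hE : ∀ t : ℝ, (∫ ω, max (Z ω - t) 0 ∂P) = ∫ u in Ioo (0:ℝ) 1, max (qf μ u - t) 0 := by
    intro t
    rw [qf_integral (g := fun z : ℝ => max (z - t) 0) (μ := μ) (hgt t)]
    have hm : AEStronglyMeasurable (fun z : ℝ => max (z - t) 0) μ :=
      ((measurable_id'.sub_const t).max measurable_const).aestronglyMeasurable
    exact (integral_map hZm.aemeasurable hm).symm
  have hint_m : ∀ t : ℝ, IntegrableOn (fun u => max (qf μ u - t) 0) (Ioo (0:ℝ) 1) := fun t =>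
    qf_integrable_comp (g := fun z : ℝ => max (z - t) 0) (μ := μ) (hgt t)
  -- integral of (qf - t) over Ioo (1-α) 1
  have hsubint : ∀ t : ℝ, ∫ u in Ioo (1 - α) (1:ℝ), (qf μ u - t) = I - α * t := by
    intro t
    rw [integral_sub hint_q' (hconst t), integral_const]
    simp only [smul_eq_mul, Measure.restrict_apply_univ, measureReal_restrict_apply_univ, Measure.real, hvol, ← hI]
  -- lower bound
  have hlow : ∀ t : ℝ, α⁻¹ * I ≤ t + α⁻¹ * ∫ ω, max (Z ω - t) 0 ∂P := by
    intro t
    rw [hE t]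
    have s1 : ∫ u in Ioo (1 - α) (1:ℝ), max (qf μ u - t) 0 ≤
        ∫ u in Ioo (0:ℝ) 1, max (qf μ u - t) 0 :=
      setIntegral_mono_set (hint_m t) (Eventually.of_forall fun u => le_max_right _ _)
        (HasSubset.Subset.eventuallyLE hsub)
    have s2 : ∫ u in Ioo (1 - α) (1:ℝ), (qf μ u - t) ≤
        ∫ u in Ioo (1 - α) (1:ℝ), max (qf μ u - t) 0 :=
      setIntegral_mono (hint_q'.sub (hconst t)) ((hint_m t).mono_set hsub)
        fun u => le_max_left _ _
    have h3 : I - α * t ≤ ∫ u in Ioo (0:ℝ) 1, max (qf μ u - t) 0 := by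
      rw [← hsubint t]; exact s2.trans s1
    have h4 := mul_le_mul_of_nonneg_left h3 (inv_nonneg.mpr hα.le)
    have h5 : α⁻¹ * α = 1 := inv_mul_cancel₀ hα.ne'
    have h6 : α⁻¹ * (I - α * t) = α⁻¹ * I - t := by
      rw [mul_sub, ← mul_assoc, h5, one_mul]
    linarith [h4, h6]
  -- the optimal t
  set t₀ : ℝ := qf μ (1 - α) with ht₀
  have hopt : (∫ u in Ioo (0:ℝ) 1, max (qf μ u - t₀) 0) = I - α * t₀ := by
    have hunion : Ioc (0:ℝ) (1 - α) ∪ Ioo (1 - α) 1 = Ioo 0 1 :=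
      Ioc_union_Ioo_eq_Ioo h1α0.le h1α.2
    have hdisj : Disjoint (Ioc (0:ℝ) (1 - α)) (Ioo (1 - α) 1) := by
      apply Set.disjoint_left.mpr
      rintro x ⟨_, hx2⟩ ⟨hx3, _⟩
      exact absurd hx3 (not_lt.mpr hx2)
    have hzero : ∫ u in Ioc (0:ℝ) (1 - α), max (qf μ u - t₀) 0 = 0 := by
      rw [setIntegral_congr_fun measurableSet_Ioc
        (g := fun _ : ℝ => (0:ℝ)) ?_, integral_zero]
      intro u hu
      have hu' : u ∈ Ioo (0:ℝ) 1 := ⟨hu.1, lt_of_le_of_lt hu.2 h1α.2⟩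
      have : qf μ u ≤ t₀ := qf_mono hu' h1α hu.2
      simp only [max_eq_right (by linarith : qf μ u - t₀ ≤ 0)]
    have hpos : ∫ u in Ioo (1 - α) (1:ℝ), max (qf μ u - t₀) 0 =
        ∫ u in Ioo (1 - α) (1:ℝ), (qf μ u - t₀) := by
      refine setIntegral_congr_fun measurableSet_Ioo fun u hu => ?_
      have hu' : u ∈ Ioo (0:ℝ) 1 := hsub hu
      have : t₀ ≤ qf μ u := qf_mono h1α hu' hu.1.le
      exact max_eq_left (by linarith)
    calc ∫ u in Ioo (0:ℝ) 1, max (qf μ u - t₀) 0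
        = ∫ u in Ioc (0:ℝ) (1 - α) ∪ Ioo (1 - α) 1, max (qf μ u - t₀) 0 := by rw [hunion]
      _ = (∫ u in Ioc (0:ℝ) (1 - α), max (qf μ u - t₀) 0)
          + ∫ u in Ioo (1 - α) (1:ℝ), max (qf μ u - t₀) 0 :=
          setIntegral_union hdisj measurableSet_Ioo
            (((hint_m t₀).mono_set (by rw [← hunion]; exact subset_union_left)))
            (((hint_m t₀).mono_set hsub))
      _ = I - α * t₀ := by rw [hzero, hpos, hsubint t₀, zero_add]
  have hval : t₀ + α⁻¹ * ∫ ω, max (Z ω - t₀) 0 ∂P = α⁻¹ * I := by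
    rw [hE t₀, hopt]
    field_simp
    ring
  have hfin : (⨅ t : ℝ, t + α⁻¹ * ∫ ω, max (Z ω - t) 0 ∂P) = α⁻¹ * I := by
    apply le_antisymm
    · exact (ciInf_le ⟨α⁻¹ * I, by rintro x ⟨t, rfl⟩; exact hlow t⟩ t₀).trans_eq hval
    · exact le_ciInf hlow
  rw [hfin]
  congr 1
  simp only [hq]
  rw [MeasureTheory.integral_Ioc_eq_integral_Ioo]
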